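/- In the symbolic slicing setup, there exists a constant C₂ > 0 such that for every τ ∈ S, every (ω,η) ∈ {0,…,n₁−1}^ℕ × {0,…,n₂−1}^ℕ, every subset A ⊆ X_{τ,ω,η}, and every k ∈ ℕ: the number of length-k cylinders of X_{τ,ω,η} (sets determined by fixing the coordinates 0,…,k−1) that intersect A is at most C₂ times the number of closed squares of the grid of side m₂^{−k} (with corners in m₂^{−k}·ℤ²) that intersect π_{τ,ω,η}(A). -/

import Mathlib

open Set Filter
noncomputable section

/-- The binary coding sequence of `t` under the rotation by `θ`:
`v_t(n) = 1` iff `t + nθ (mod 1) ∈ [1−θ, 1)`. -/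
def vseq (θ t : ℝ) : ℕ → Bool := fun n => decide (1 - θ ≤ Int.fract (t + n * θ))

/-- `S`: the closure of `{v_t : t ∈ [0,1)}` in the product topology on `{0,1}^ℕ₀`. -/
def Sset (θ : ℝ) : Set (ℕ → Bool) :=
  closure { v | ∃ t ∈ Set.Ico (0 : ℝ) 1, v = vseq θ t }

/-- `x_{k+1}(τ)`: the (0-indexed) `k`-th position where `τ` equals `1`. -/
def nthOne (τ : ℕ → Bool) (k : ℕ) : ℕ := Nat.nth (fun n => τ n = true) k

/-- The symbolic space `X_{τ,ω,η}`: sequences `((a_n,b_n))_{n≥0}` with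
`b_n ∈ Λ_{η_n}`, `a_{x_{k+1}(τ)} ∈ Γ_{ω_k}`, and `a_n = 1` off `Z(τ)`. -/
def Xset (Γ Λ : ℕ → Set ℕ) (τ : ℕ → Bool) (ω η : ℕ → ℕ) : Set (ℕ → ℕ × ℕ) :=
  { c | (∀ n, (c n).2 ∈ Λ (η n)) ∧ (∀ k, (c (nthOne τ k)).1 ∈ Γ (ω k)) ∧
        (∀ n, τ n = false → (c n).1 = 1) }

/-- The projection `π_{τ,ω,η} : X_{τ,ω,η} → [0,1]²`. -/
def piSym (m₁ m₂ : ℕ) (τ : ℕ → Bool) (c : ℕ → ℕ × ℕ) : ℝ × ℝ :=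
  (∑' k : ℕ, ((c (nthOne τ k)).1 : ℝ) / (m₁ : ℝ) ^ (k + 1),
   ∑' k : ℕ, ((c k).2 : ℝ) / (m₂ : ℝ) ^ (k + 1))

/-- The symbolic metric `d(x,y) = m₂^{−min{k : x_k ≠ y_k}}`. -/
def symDist (m₂ : ℕ) (x y : ℕ → ℕ × ℕ) : ℝ :=
  letI := Classical.dec (x = y)
  if x = y then 0 else ((m₂ : ℝ) ^ sInf { k | x k ≠ y k })⁻¹

/-- Truncation to the first `k` coordinates (padding with `(0,0)`); length-`k` cylinders of
a set correspond to points of its image under `trunc k`. -/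
def trunc (k : ℕ) (x : ℕ → ℕ × ℕ) : ℕ → ℕ × ℕ := fun i => if i < k then x i else (0, 0)

/-- The closed square of the `m₂^{-k}`-grid indexed by `q ∈ ℤ²`. -/
def gridSq (m₂ k : ℕ) (q : ℤ × ℤ) : Set (ℝ × ℝ) :=
  Set.Icc ((q.1 : ℝ) / (m₂ : ℝ) ^ k, (q.2 : ℝ) / (m₂ : ℝ) ^ k)
    (((q.1 : ℝ) + 1) / (m₂ : ℝ) ^ k, ((q.2 : ℝ) + 1) / (m₂ : ℝ) ^ k)




private lemma digitVal_succ (m : ℕ) (d : ℕ → ℕ) (k : ℕ) :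
    ∑ j ∈ Finset.range (k+1), d j * m^(k+1-1-j)
      = m * (∑ j ∈ Finset.range k, d j * m^(k-1-j)) + d k := by
  rw [Finset.sum_range_succ]
  have h1 : d k * m ^ (k+1-1-k) = d k := by
    have : k+1-1-k = 0 := by omega
    rw [this, pow_zero, mul_one]
  rw [h1, Finset.mul_sum]
  congr 1
  refine Finset.sum_congr rfl fun j hj => ?_
  have hj' := Finset.mem_range.mp hj
  have h2 : k+1-1-j = (k-1-j)+1 := by omega
  rw [h2, pow_succ]
  ring

private lemma digitVal_inj (m : ℕ) (hm : 0 < m) :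
    ∀ (k : ℕ) (d e : ℕ → ℕ), (∀ j, d j < m) → (∀ j, e j < m) →
      (∑ j ∈ Finset.range k, d j * m^(k-1-j)) = (∑ j ∈ Finset.range k, e j * m^(k-1-j)) →
      ∀ j < k, d j = e j := by
  intro k
  induction k with
  | zero => intro _ _ _ _ _ j hj; omega
  | succ k ih =>
    intro d e hd he hsum j hj
    rw [digitVal_succ, digitVal_succ] at hsum
    have hdk : d k = e k := by
      have h1 := Nat.mul_add_mod m (∑ j ∈ Finset.range k, d j * m^(k-1-j)) (d k)
      have h2 := Nat.mul_add_mod m (∑ j ∈ Finset.range k, e j * m^(k-1-j)) (e k)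
      have h3 : d k % m = d k := Nat.mod_eq_of_lt (hd k)
      have h4 : e k % m = e k := Nat.mod_eq_of_lt (he k)
      rw [hsum] at h1
      omega
    rcases Nat.lt_succ_iff_lt_or_eq.mp hj with h | h
    · have hDE : (∑ j ∈ Finset.range k, d j * m^(k-1-j)) = ∑ j ∈ Finset.range k, e j * m^(k-1-j) := by
        have := hsum
        rw [hdk] at this
        have h5 : m * (∑ j ∈ Finset.range k, d j * m^(k-1-j))
            = m * (∑ j ∈ Finset.range k, e j * m^(k-1-j)) := by omega
        exact Nat.eq_of_mul_eq_mul_left hm h5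
      exact ih d e hd he hDE j h
    · rw [h]; exact hdk

private lemma summable_digit (m : ℕ) (hm : 2 ≤ m) (d : ℕ → ℕ) (hd : ∀ j, d j < m) :
    Summable (fun j : ℕ => (d j : ℝ) / (m : ℝ) ^ (j + 1)) := by
  have hm1 : (1:ℝ) < m := by exact_mod_cast hm.trans_lt' one_lt_two
  have hm0 : (0:ℝ) < m := by linarith
  refine Summable.of_nonneg_of_le (fun j => by positivity) (fun j => ?_)
    (summable_geometric_of_lt_one (by positivity) (inv_lt_one_of_one_lt₀ hm1))
  rw [div_le_iff₀ (by positivity)]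
  have h1 : ((m:ℝ)⁻¹)^j * (m:ℝ)^(j+1) = m := by
    rw [pow_succ']
    field_simp
    rw [← mul_pow, one_div, inv_mul_cancel₀ hm0.ne', one_pow]
  rw [h1]
  have := hd j
  exact_mod_cast this.le

set_option maxHeartbeats 1000000 in
/-- Main per-coordinate bounds: the digit value `D_k` satisfies `D_k ≤ m^k y ≤ D_k + 1`,
and `0 ≤ y ≤ 1`, where `y = ∑ d j / m^(j+1)`. -/
private lemma key_bounds (m : ℕ) (hm : 2 ≤ m) (d : ℕ → ℕ) (hd : ∀ j, d j < m) (k : ℕ) :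
    ((∑ j ∈ Finset.range k, d j * m^(k-1-j) : ℕ) : ℝ)
        ≤ (m:ℝ)^k * (∑' j : ℕ, (d j:ℝ)/(m:ℝ)^(j+1)) ∧
    (m:ℝ)^k * (∑' j : ℕ, (d j:ℝ)/(m:ℝ)^(j+1))
        ≤ ((∑ j ∈ Finset.range k, d j * m^(k-1-j) : ℕ) : ℝ) + 1 ∧
    0 ≤ (∑' j : ℕ, (d j:ℝ)/(m:ℝ)^(j+1)) ∧ (∑' j : ℕ, (d j:ℝ)/(m:ℝ)^(j+1)) ≤ 1 := by
  have hm1 : (1:ℝ) < m := by exact_mod_cast hm.trans_lt' one_lt_two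
  have hm0 : (0:ℝ) < m := by linarith
  have hsum := summable_digit m hm d hd
  -- cast of digit value
  have hcast : ∀ K : ℕ, ((∑ j ∈ Finset.range K, d j * m^(K-1-j) : ℕ) : ℝ)
      = (m:ℝ)^K * ∑ j ∈ Finset.range K, (d j:ℝ)/(m:ℝ)^(j+1) := by
    intro K
    push_cast
    rw [Finset.mul_sum]
    refine Finset.sum_congr rfl fun j hj => ?_
    have hjk : j < K := Finset.mem_range.mp hj
    have hw : (m:ℝ)^K = (m:ℝ)^(j+1) * (m:ℝ)^(K-1-j) := by
      rw [← pow_add]; congr 1; omega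
    rw [hw]
    have hne : (m:ℝ)^(j+1) ≠ 0 := by positivity
    field_simp
  -- partial sums vs tsum
  have htail : ∀ K : ℕ, (∑ j ∈ Finset.range K, (d j:ℝ)/(m:ℝ)^(j+1))
      ≤ (∑' j : ℕ, (d j:ℝ)/(m:ℝ)^(j+1)) ∧
      (∑' j : ℕ, (d j:ℝ)/(m:ℝ)^(j+1))
        ≤ (∑ j ∈ Finset.range K, (d j:ℝ)/(m:ℝ)^(j+1)) + ((m:ℝ)^K)⁻¹ := by
    intro K
    have hsplit := Summable.sum_add_tsum_nat_add (f := fun j : ℕ => (d j:ℝ)/(m:ℝ)^(j+1)) K hsum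
    have htail0 : 0 ≤ ∑' j : ℕ, (d (j+K):ℝ)/(m:ℝ)^(j+K+1) :=
      tsum_nonneg fun j => by positivity
    have htailsum : Summable (fun j : ℕ => (d (j+K):ℝ)/(m:ℝ)^(j+K+1)) :=
      ((summable_nat_add_iff K).mpr hsum)
    have hgeom : Summable (fun j : ℕ => (((m:ℝ)-1)/(m:ℝ)^(K+1)) * ((m:ℝ)⁻¹)^j) :=
      (summable_geometric_of_lt_one (by positivity) (inv_lt_one_of_one_lt₀ hm1)).mul_left _
    have htub : (∑' j : ℕ, (d (j+K):ℝ)/(m:ℝ)^(j+K+1))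
        ≤ ∑' j : ℕ, (((m:ℝ)-1)/(m:ℝ)^(K+1)) * ((m:ℝ)⁻¹)^j := by
      refine Summable.tsum_le_tsum (fun j => ?_) htailsum hgeom
      have hdj : (d (j+K) : ℝ) ≤ (m:ℝ) - 1 := by
        have h : (d (j+K)) + 1 ≤ m := hd (j+K)
        have h' : ((d (j+K):ℝ)) + 1 ≤ (m:ℝ) := by exact_mod_cast h
        linarith
      have hppos : (0:ℝ) < (m:ℝ)^(j+K+1) := by positivity
      rw [div_le_iff₀ hppos]
      have hrw : ((m:ℝ)-1)/(m:ℝ)^(K+1) * ((m:ℝ)⁻¹)^j * (m:ℝ)^(j+K+1) = (m:ℝ)-1 := by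
        rw [inv_pow]
        have : (m:ℝ)^(j+K+1) = (m:ℝ)^j * (m:ℝ)^(K+1) := by
          rw [← pow_add, Nat.add_assoc]
        rw [this]
        field_simp
      rw [hrw]; exact hdj
    have hgeomval : (∑' j : ℕ, (((m:ℝ)-1)/(m:ℝ)^(K+1)) * ((m:ℝ)⁻¹)^j) = ((m:ℝ)^K)⁻¹ := by
      rw [tsum_mul_left, tsum_geometric_of_lt_one (by positivity) (inv_lt_one_of_one_lt₀ hm1)]
      have hne1 : (m:ℝ) - 1 ≠ 0 := by linarith
      have hne : (m:ℝ) ≠ 0 := by linarith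
      rw [pow_succ]
      field_simp
    constructor
    · calc (∑ j ∈ Finset.range K, (d j:ℝ)/(m:ℝ)^(j+1))
          ≤ (∑ j ∈ Finset.range K, (d j:ℝ)/(m:ℝ)^(j+1)) + ∑' j : ℕ, (d (j+K):ℝ)/(m:ℝ)^(j+K+1) := by
            linarith
        _ = _ := by
            rw [← hsplit]
    · rw [← hsplit]
      have := htub.trans hgeomval.le
      linarith
  have h1 := (htail k).1
  have h2 := (htail k).2
  have h01 := htail 0
  refine ⟨?_, ?_, ?_, ?_⟩
  · rw [hcast k]
    exact mul_le_mul_of_nonneg_left h1 (by positivity)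
  · rw [hcast k]
    have := mul_le_mul_of_nonneg_left h2 (le_of_lt (by positivity : (0:ℝ) < (m:ℝ)^k))
    have hmk : ((m:ℝ)^k) * ((m:ℝ)^k)⁻¹ = 1 := by
      field_simp
    calc (m:ℝ)^k * (∑' j : ℕ, (d j:ℝ)/(m:ℝ)^(j+1))
        ≤ (m:ℝ)^k * ((∑ j ∈ Finset.range k, (d j:ℝ)/(m:ℝ)^(j+1)) + ((m:ℝ)^k)⁻¹) := this
      _ = (m:ℝ)^k * (∑ j ∈ Finset.range k, (d j:ℝ)/(m:ℝ)^(j+1)) + 1 := by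
          rw [mul_add, hmk]
      _ = _ := by rw [mul_comm]
  · have : (0:ℝ) ≤ ∑ j ∈ Finset.range 0, (d j:ℝ)/(m:ℝ)^(j+1) := by simp
    exact le_trans this h01.1
  · have := h01.2
    simpa using this



private lemma floor_step (θ s : ℝ) (h0 : 0 < θ) (h1 : θ < 1) :
    (⌊s + θ⌋ - ⌊s⌋ : ℤ) = if 1 - θ ≤ Int.fract s then 1 else 0 := by
  have hf0 := Int.fract_nonneg s
  have hf1 := Int.fract_lt_one s
  have hs : (⌊s⌋ : ℝ) + Int.fract s = s := Int.floor_add_fract s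
  split_ifs with h
  · have : ⌊s + θ⌋ = ⌊s⌋ + 1 := by
      rw [Int.floor_eq_iff]
      constructor
      · push_cast; linarith
      · push_cast; linarith
    omega
  · push_neg at h
    have : ⌊s + θ⌋ = ⌊s⌋ := by
      rw [Int.floor_eq_iff]
      constructor
      · push_cast; linarith
      · push_cast; linarith
    omega

private lemma count_vseq (θ t : ℝ) (h0 : 0 < θ) (h1 : θ < 1) (ht : t ∈ Set.Ico (0:ℝ) 1) (k : ℕ) :
    ((Nat.count (fun n => vseq θ t n = true) k : ℤ) : ℝ) ≤ k * θ + 1 := by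
  have key : ∀ K : ℕ, (Nat.count (fun n => vseq θ t n = true) K : ℤ) = ⌊t + K * θ⌋ := by
    intro K
    induction K with
    | zero =>
      simp only [Nat.count_zero, Nat.cast_zero, zero_mul, add_zero]
      exact (Int.floor_eq_zero_iff.mpr ht).symm
    | succ K ih =>
      rw [Nat.count_succ]
      push_cast
      have hstep := floor_step θ (t + K * θ) h0 h1
      have harg : t + ((K:ℝ)+1) * θ = (t + K * θ) + θ := by ring
      have hv : (vseq θ t K = true) ↔ (1 - θ ≤ Int.fract (t + K * θ)) := by
        simp [vseq]
      rw [harg]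
      rw [ih] at *
      by_cases hc : 1 - θ ≤ Int.fract (t + K * θ)
      · rw [if_pos (hv.mpr hc)]
        rw [if_pos hc] at hstep
        push_cast
        omega
      · rw [if_neg (fun hh => hc (hv.mp hh))]
        rw [if_neg hc] at hstep
        push_cast
        omega
  rw [key k]
  have h2 : (⌊t + k * θ⌋ : ℝ) ≤ t + k * θ := Int.floor_le _
  have h3 : t < 1 := ht.2
  linarith

private lemma count_S_le (θ : ℝ) (h0 : 0 < θ) (h1 : θ < 1) {τ : ℕ → Bool} (hτ : τ ∈ Sset θ)
    (k : ℕ) : ((Nat.count (fun n => τ n = true) k : ℤ) : ℝ) ≤ k * θ + 1 := by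
  obtain ⟨t, ht, hagree⟩ : ∃ t ∈ Set.Ico (0:ℝ) 1, ∀ n < k, vseq θ t n = τ n := by
    classical
    set U : Set (ℕ → Bool) := {σ | ∀ n < k, σ n = τ n} with hU
    have hUopen : IsOpen U := by
      have : U = ⋂ n ∈ Finset.range k, {σ : ℕ → Bool | σ n = τ n} := by
        ext σ
        simp [hU]
      rw [this]
      refine isOpen_biInter_finset fun n _ => ?_
      have hpre : {σ : ℕ → Bool | σ n = τ n} = (fun σ : ℕ → Bool => σ n) ⁻¹' ({τ n} : Set Bool) :=
        rfl
      rw [hpre]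
      exact (continuous_apply n).isOpen_preimage _ (isOpen_discrete _)
    have hτU : τ ∈ U := fun n _ => rfl
    obtain ⟨σ, hσU, hσM⟩ := mem_closure_iff.mp hτ U hUopen hτU
    obtain ⟨t, ht, rfl⟩ := hσM
    exact ⟨t, ht, fun n hn => hσU n hn⟩
  have hcnt : Nat.count (fun n => τ n = true) k = Nat.count (fun n => vseq θ t n = true) k := by
    classical
    simp only [Nat.count_eq_card_filter_range]
    congr 1
    apply Finset.filter_congr
    intro n hn
    have := hagree n (Finset.mem_range.mp hn)
    simp [this]
  rw [hcnt]
  exact count_vseq θ t h0 h1 ht k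


set_option maxHeartbeats 2000000 in
/-- The number of length-`k` cylinders of `X_{τ,ω,η}` meeting `A` is at
most a constant multiple of the number of `m₂^{-k}`-grid squares meeting `π_{τ,ω,η}(A)`. -/
theorem stmt15
    (m₁ m₂ n₁ n₂ : ℕ) (hm₂ : 2 ≤ m₂) (hm : m₂ < m₁) (hn₁ : 2 ≤ n₁) (hn₂ : 2 ≤ n₂)
    (θ : ℝ) (hθ : θ = Real.log m₂ / Real.log m₁) (hirr : Irrational θ)
    (Γ Λ : ℕ → Set ℕ)
    (hΓ : ∀ i < n₁, (Γ i).Nonempty ∧ Γ i ⊆ Set.Iio m₁)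
    (hΛ : ∀ j < n₂, (Λ j).Nonempty ∧ Λ j ⊆ Set.Iio m₂) :
    ∃ C₂ : ℝ, 0 < C₂ ∧
      ∀ τ ∈ Sset θ, ∀ ω η : ℕ → ℕ, (∀ k, ω k < n₁) → (∀ k, η k < n₂) →
        ∀ A ⊆ Xset Γ Λ τ ω η, ∀ k : ℕ,
          ((trunc k '' A).ncard : ℝ) ≤
            C₂ * ({ q : ℤ × ℤ | (gridSq m₂ k q ∩ piSym m₁ m₂ τ '' A).Nonempty }.ncard : ℝ) := by
  classical
  have hm₂R : (1:ℝ) < m₂ := by exact_mod_cast (by omega : 1 < m₂)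
  have hm₁R : (1:ℝ) < m₁ := by exact_mod_cast (by omega : 1 < m₁)
  have hm₁0 : (0:ℝ) < m₁ := by linarith
  have hm₂0 : (0:ℝ) < m₂ := by linarith
  have hθ0 : 0 < θ := by
    rw [hθ]; exact div_pos (Real.log_pos hm₂R) (Real.log_pos hm₁R)
  have hθ1 : θ < 1 := by
    rw [hθ, div_lt_one (Real.log_pos hm₁R)]
    exact Real.log_lt_log (by linarith) (by exact_mod_cast hm)
  have hm₁θ : (m₁:ℝ) ^ θ = m₂ := by
    rw [hθ, Real.log_div_log]
    exact Real.rpow_logb hm₁0 (ne_of_gt hm₁R) hm₂0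
  refine ⟨2 * (m₁:ℝ) + 4, by positivity, ?_⟩
  intro τ hτ ω η hω hη A hA k
  set r : ℕ := Nat.count (fun n => τ n = true) k with hrdef
  have hrθ : (r:ℝ) ≤ k * θ + 1 := by
    have h := count_S_le θ hθ0 hθ1 hτ k
    rw [hrdef]; exact_mod_cast h
  have hpow : ((m₁:ℝ))^r ≤ (m₁:ℝ) * (m₂:ℝ)^k := by
    have h1 : ((m₁:ℝ))^r = (m₁:ℝ) ^ ((r:ℕ):ℝ) := (Real.rpow_natCast _ _).symm
    have h2 : (m₁:ℝ) ^ ((r:ℕ):ℝ) ≤ (m₁:ℝ) ^ (θ * (k:ℝ) + 1) := by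
      apply Real.rpow_le_rpow_of_exponent_le hm₁R.le
      nlinarith [hrθ]
    have h3 : (m₁:ℝ) ^ (θ * (k:ℝ) + 1) = ((m₁:ℝ)^θ)^((k:ℕ):ℝ) * m₁ := by
      rw [Real.rpow_add hm₁0, Real.rpow_one, Real.rpow_mul hm₁0.le]
    rw [h1]
    calc (m₁:ℝ) ^ ((r:ℕ):ℝ) ≤ (m₁:ℝ) ^ (θ * (k:ℝ) + 1) := h2
      _ = ((m₁:ℝ)^θ)^((k:ℕ):ℝ) * m₁ := h3
      _ = (m₂:ℝ)^(k:ℕ) * m₁ := by rw [hm₁θ, Real.rpow_natCast]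
      _ = (m₁:ℝ) * (m₂:ℝ)^k := mul_comm _ _
  set T : Set (ℕ → ℕ × ℕ) := trunc k '' A with hT
  set Q : Set (ℤ × ℤ) := { q : ℤ × ℤ | (gridSq m₂ k q ∩ piSym m₁ m₂ τ '' A).Nonempty } with hQ
  have hex : ∀ u ∈ T, ∃ c, c ∈ A ∧ trunc k c = u := fun u hu => (Set.mem_image _ _ _).mp hu
  choose! rep hrepA hrepT using hex
  set dseq : (ℕ → ℕ × ℕ) → ℕ → ℕ := fun u j => (rep u (nthOne τ j)).1 with hdseq
  set bseq : (ℕ → ℕ × ℕ) → ℕ → ℕ := fun u j => (rep u j).2 with hbseq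
  have hgood : ∀ u ∈ T, rep u ∈ Xset Γ Λ τ ω η := fun u hu => hA (hrepA u hu)
  have hd : ∀ u ∈ T, ∀ j, dseq u j < m₁ := fun u hu j =>
    (hΓ (ω j) (hω j)).2 ((hgood u hu).2.1 j)
  have hb : ∀ u ∈ T, ∀ j, bseq u j < m₂ := fun u hu j =>
    (hΛ (η j) (hη j)).2 ((hgood u hu).1 j)
  set xv : (ℕ → ℕ × ℕ) → ℝ := fun u => ∑' j : ℕ, (dseq u j : ℝ)/(m₁:ℝ)^(j+1) with hxv
  set yv : (ℕ → ℕ × ℕ) → ℝ := fun u => ∑' j : ℕ, (bseq u j : ℝ)/(m₂:ℝ)^(j+1) with hyv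
  have hπ : ∀ u, piSym m₁ m₂ τ (rep u) = (xv u, yv u) := by
    intro u
    simp only [hxv, hyv, hdseq, hbseq, piSym]
  set DD : (ℕ → ℕ × ℕ) → ℕ := fun u => ∑ j ∈ Finset.range r, dseq u j * m₁^(r-1-j) with hDD
  set BB : (ℕ → ℕ × ℕ) → ℕ := fun u => ∑ j ∈ Finset.range k, bseq u j * m₂^(k-1-j) with hBB
  have hDb : ∀ u ∈ T, ((DD u:ℝ) ≤ (m₁:ℝ)^r * xv u ∧ (m₁:ℝ)^r * xv u ≤ (DD u:ℝ) + 1 ∧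
      0 ≤ xv u ∧ xv u ≤ 1) := by
    intro u hu
    simpa only [hDD, hxv] using key_bounds m₁ (by omega) (dseq u) (hd u hu) r
  have hBb : ∀ u ∈ T, ((BB u:ℝ) ≤ (m₂:ℝ)^k * yv u ∧ (m₂:ℝ)^k * yv u ≤ (BB u:ℝ) + 1 ∧
      0 ≤ yv u ∧ yv u ≤ 1) := by
    intro u hu
    simpa only [hBB, hyv] using key_bounds m₂ hm₂ (bseq u) (hb u hu) k
  -- injectivity of digit data on T
  have hinj : Set.InjOn (fun u => (DD u, BB u)) T := by
    intro u hu u' hu' hpair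
    have h1 : DD u = DD u' := congrArg Prod.fst hpair
    have h2 : BB u = BB u' := congrArg Prod.snd hpair
    simp only [hDD] at h1
    simp only [hBB] at h2
    have hbb : ∀ j < k, bseq u j = bseq u' j :=
      digitVal_inj m₂ (by omega) k _ _ (hb u hu) (hb u' hu') h2
    have hdd : ∀ j < r, dseq u j = dseq u' j :=
      digitVal_inj m₁ (by omega) r _ _ (hd u hu) (hd u' hu') h1
    rw [← hrepT u hu, ← hrepT u' hu']
    funext n
    simp only [trunc]
    by_cases hn : n < k
    · rw [if_pos hn, if_pos hn]
      have hsnd : (rep u n).2 = (rep u' n).2 := hbb n hn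
      have hfst : (rep u n).1 = (rep u' n).1 := by
        by_cases hτn : τ n = true
        · have hcount : Nat.count (fun n => τ n = true) n < r :=
            Nat.count_strict_mono hτn hn
          have hnth : nthOne τ (Nat.count (fun n => τ n = true) n) = n :=
            Nat.nth_count hτn
          have e1 : dseq u (Nat.count (fun n => τ n = true) n) = (rep u n).1 := by
            simp only [hdseq]; rw [hnth]
          have e2 : dseq u' (Nat.count (fun n => τ n = true) n) = (rep u' n).1 := by
            simp only [hdseq]; rw [hnth]
          rw [← e1, ← e2, hdd _ hcount]
        · have hfalse : τ n = false := by simpa using hτn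
          rw [(hgood u hu).2.2 n hfalse, (hgood u' hu').2.2 n hfalse]
      exact Prod.ext hfst hsnd
    · rw [if_neg hn, if_neg hn]
  -- finiteness of T
  have hTfin : T.Finite := by
    apply Set.Finite.of_finite_image ?_ hinj
    apply Set.Finite.subset ((Set.finite_Iic (m₁^r)).prod (Set.finite_Iic (m₂^k)))
    rintro _ ⟨u, hu, rfl⟩
    obtain ⟨l1, l2, x0, x1⟩ := hDb u hu
    obtain ⟨l1', l2', y0, y1⟩ := hBb u hu
    constructor
    · have hx : (DD u : ℝ) ≤ (m₁:ℝ)^r := by nlinarith [pow_pos hm₁0 r]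
      exact Set.mem_Iic.mpr (by exact_mod_cast hx)
    · have hy : (BB u : ℝ) ≤ (m₂:ℝ)^k := by nlinarith [pow_pos hm₂0 k]
      exact Set.mem_Iic.mpr (by exact_mod_cast hy)
  set φ : (ℕ → ℕ × ℕ) → ℤ × ℤ := fun u => (⌊(m₂:ℝ)^k * xv u⌋, ⌊(m₂:ℝ)^k * yv u⌋) with hφ
  have hm₂kpos : (0:ℝ) < (m₂:ℝ)^k := by positivity
  have hφQ : ∀ u ∈ T, φ u ∈ Q := by
    intro u hu
    refine ⟨piSym m₁ m₂ τ (rep u), ?_, Set.mem_image_of_mem _ (hrepA u hu)⟩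
    rw [hπ u]
    simp only [hφ, gridSq, Set.mem_Icc]
    have f1 := Int.floor_le ((m₂:ℝ)^k * xv u)
    have f2 := Int.lt_floor_add_one ((m₂:ℝ)^k * xv u)
    have f3 := Int.floor_le ((m₂:ℝ)^k * yv u)
    have f4 := Int.lt_floor_add_one ((m₂:ℝ)^k * yv u)
    refine ⟨Prod.mk_le_mk.mpr ⟨?_, ?_⟩, Prod.mk_le_mk.mpr ⟨?_, ?_⟩⟩
    · rw [div_le_iff₀ hm₂kpos]; linarith
    · rw [div_le_iff₀ hm₂kpos]; linarith
    · rw [le_div_iff₀ hm₂kpos]; linarith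
    · rw [le_div_iff₀ hm₂kpos]; linarith
  -- boundedness of the projected image
  have hπA : ∀ P ∈ piSym m₁ m₂ τ '' A, 0 ≤ P.1 ∧ P.1 ≤ 1 ∧ 0 ≤ P.2 ∧ P.2 ≤ 1 := by
    rintro _ ⟨c, hc, rfl⟩
    have hc' := hA hc
    have hd1 : ∀ j, (c (nthOne τ j)).1 < m₁ := fun j => (hΓ (ω j) (hω j)).2 (hc'.2.1 j)
    have hb1 : ∀ j, (c j).2 < m₂ := fun j => (hΛ (η j) (hη j)).2 (hc'.1 j)
    have k1 := key_bounds m₁ (by omega) (fun j => (c (nthOne τ j)).1) hd1 0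
    have k2 := key_bounds m₂ hm₂ (fun j => (c j).2) hb1 0
    exact ⟨k1.2.2.1, k1.2.2.2, k2.2.2.1, k2.2.2.2⟩
  have hQfin : Q.Finite := by
    apply Set.Finite.subset
      (((Set.finite_Icc (-1:ℤ) ((m₂:ℤ)^k)).prod (Set.finite_Icc (-1:ℤ) ((m₂:ℤ)^k))))
    rintro q ⟨P, hPgrid, hPA⟩
    obtain ⟨h0x, h1x, h0y, h1y⟩ := hπA P hPA
    rw [gridSq, Set.mem_Icc] at hPgrid
    have ha := (Prod.le_def.mp hPgrid.1).1
    have hb' := (Prod.le_def.mp hPgrid.1).2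
    have hc := (Prod.le_def.mp hPgrid.2).1
    have hd' := (Prod.le_def.mp hPgrid.2).2
    simp only at ha hb' hc hd'
    constructor
    · constructor
      · -- -1 ≤ q.1
        have : (0:ℝ) ≤ ((q.1:ℝ) + 1) / (m₂:ℝ)^k := le_trans h0x hc
        have h5 : (0:ℝ) ≤ (q.1:ℝ) + 1 := by
          by_contra hcon
          push_neg at hcon
          nlinarith [div_neg_of_neg_of_pos hcon hm₂kpos]
        have : ((-1:ℤ):ℝ) ≤ (q.1:ℝ) := by push_cast; linarith
        exact_mod_cast this
      · -- q.1 ≤ m₂^k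
        have h5 : (q.1:ℝ)/(m₂:ℝ)^k ≤ 1 := le_trans ha h1x
        rw [div_le_one hm₂kpos] at h5
        have : (q.1:ℝ) ≤ (((m₂:ℤ)^k : ℤ):ℝ) := by push_cast; linarith
        exact_mod_cast this
    · constructor
      · have : (0:ℝ) ≤ ((q.2:ℝ) + 1) / (m₂:ℝ)^k := le_trans h0y hd'
        have h5 : (0:ℝ) ≤ (q.2:ℝ) + 1 := by
          by_contra hcon
          push_neg at hcon
          nlinarith [div_neg_of_neg_of_pos hcon hm₂kpos]
        have : ((-1:ℤ):ℝ) ≤ (q.2:ℝ) := by push_cast; linarith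
        exact_mod_cast this
      · have h5 : (q.2:ℝ)/(m₂:ℝ)^k ≤ 1 := le_trans hb' h1y
        rw [div_le_one hm₂kpos] at h5
        have : (q.2:ℝ) ≤ (((m₂:ℤ)^k : ℤ):ℝ) := by push_cast; linarith
        exact_mod_cast this
  set s : Finset (ℕ → ℕ × ℕ) := hTfin.toFinset with hs
  have hsT : ∀ u, u ∈ s ↔ u ∈ T := fun u => hTfin.mem_toFinset
  -- fiber bound
  have hfiber : ∀ q ∈ s.image φ, (s.filter fun u => φ u = q).card ≤ (m₁+2) * 2 := by
    intro q hq
    set L : ℝ := (q.1:ℝ) * ((m₁:ℝ)^r / (m₂:ℝ)^k) with hL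
    have hcard : ((Finset.Icc (⌈L⌉-1) (⌈L⌉+(m₁:ℤ))) ×ˢ (Finset.Icc (q.2-1) q.2)).card
        = (m₁+2) * 2 := by
      rw [Finset.card_product, Int.card_Icc, Int.card_Icc]
      have e1 : ⌈L⌉ + (m₁:ℤ) + 1 - (⌈L⌉ - 1) = (m₁:ℤ) + 2 := by ring
      have e2 : q.2 + 1 - (q.2 - 1) = 2 := by ring
      rw [e1, e2]
      have e3 : ((m₁:ℤ) + 2).toNat = m₁ + 2 := by omega
      have e4 : (2:ℤ).toNat = 2 := by omega
      rw [e3, e4]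
    rw [← hcard]
    apply Finset.card_le_card_of_injOn (fun u => ((DD u : ℤ), (BB u : ℤ)))
    · intro u hu
      rw [Finset.mem_coe, Finset.mem_filter] at hu
      obtain ⟨hus, hφu⟩ := hu
      have huT : u ∈ T := (hsT u).mp hus
      obtain ⟨ld, ld2, x0, x1⟩ := hDb u huT
      obtain ⟨lb, lb2, y0, y1⟩ := hBb u huT
      simp only [hφ] at hφu
      have e1 : ⌊(m₂:ℝ)^k * xv u⌋ = q.1 := congrArg Prod.fst hφu
      have e2 : ⌊(m₂:ℝ)^k * yv u⌋ = q.2 := congrArg Prod.snd hφu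
      have hq1a : (q.1:ℝ) ≤ (m₂:ℝ)^k * xv u := by rw [← e1]; exact Int.floor_le _
      have hq1b : (m₂:ℝ)^k * xv u < (q.1:ℝ) + 1 := by rw [← e1]; exact Int.lt_floor_add_one _
      have hq2a : (q.2:ℝ) ≤ (m₂:ℝ)^k * yv u := by rw [← e2]; exact Int.floor_le _
      have hρ : (m₁:ℝ)^r / (m₂:ℝ)^k ≤ (m₁:ℝ) := by
        rw [div_le_iff₀ hm₂kpos]; exact hpow
      have hρ0 : (0:ℝ) ≤ (m₁:ℝ)^r / (m₂:ℝ)^k := by positivity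
      have erw : (m₁:ℝ)^r * xv u = ((m₁:ℝ)^r / (m₂:ℝ)^k) * ((m₂:ℝ)^k * xv u) := by
        field_simp
      have hDup : (DD u : ℝ) ≤ L + m₁ := by
        have h6 : ((m₁:ℝ)^r / (m₂:ℝ)^k) * ((m₂:ℝ)^k * xv u)
            ≤ ((m₁:ℝ)^r / (m₂:ℝ)^k) * ((q.1:ℝ)+1) :=
          mul_le_mul_of_nonneg_left hq1b.le hρ0
        have h7 : ((m₁:ℝ)^r / (m₂:ℝ)^k) * ((q.1:ℝ)+1) = L + (m₁:ℝ)^r / (m₂:ℝ)^k := by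
          rw [hL]; ring
        calc (DD u:ℝ) ≤ (m₁:ℝ)^r * xv u := ld
          _ = ((m₁:ℝ)^r / (m₂:ℝ)^k) * ((m₂:ℝ)^k * xv u) := erw
          _ ≤ ((m₁:ℝ)^r / (m₂:ℝ)^k) * ((q.1:ℝ)+1) := h6
          _ = L + (m₁:ℝ)^r / (m₂:ℝ)^k := h7
          _ ≤ L + m₁ := by linarith
      have hDlo : L - 1 ≤ (DD u : ℝ) := by
        have h6 : ((m₁:ℝ)^r / (m₂:ℝ)^k) * (q.1:ℝ)
            ≤ ((m₁:ℝ)^r / (m₂:ℝ)^k) * ((m₂:ℝ)^k * xv u) :=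
          mul_le_mul_of_nonneg_left hq1a hρ0
        have h7 : L = ((m₁:ℝ)^r / (m₂:ℝ)^k) * (q.1:ℝ) := by rw [hL]; ring
        rw [h7]
        rw [← erw] at h6
        linarith
      rw [Finset.mem_coe, Finset.mem_product, Finset.mem_Icc, Finset.mem_Icc]
      refine ⟨⟨?_, ?_⟩, ?_, ?_⟩
      · have h8 : ⌈L⌉ ≤ (DD u : ℤ) + 1 := by
          apply Int.ceil_le.mpr
          push_cast
          linarith
        dsimp only
        omega
      · have h8 : (DD u : ℝ) ≤ ((⌈L⌉ + (m₁:ℤ) : ℤ):ℝ) := by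
          push_cast
          have := Int.le_ceil L
          linarith
        exact_mod_cast h8
      · have h8 : (q.2:ℝ) ≤ (BB u:ℝ) + 1 := le_trans hq2a lb2
        have h9 : q.2 ≤ (BB u : ℤ) + 1 := by exact_mod_cast h8
        dsimp only
        omega
      · rw [← e2]
        apply Int.le_floor.mpr
        push_cast
        exact lb
    · intro u hu u' hu' he
      have huT : u ∈ T := (hsT u).mp (Finset.mem_filter.mp (Finset.mem_coe.mp hu)).1
      have huT' : u' ∈ T := (hsT u').mp (Finset.mem_filter.mp (Finset.mem_coe.mp hu')).1
      apply hinj huT huT'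
      have he' : (((DD u : ℤ), (BB u : ℤ)) : ℤ × ℤ) = ((DD u' : ℤ), (BB u' : ℤ)) := he
      have e1 : (DD u : ℤ) = (DD u' : ℤ) := congrArg Prod.fst he'
      have e2 : (BB u : ℤ) = (BB u' : ℤ) := congrArg Prod.snd he'
      exact Prod.ext (by exact_mod_cast e1) (by exact_mod_cast e2)
  have hmain : s.card ≤ ((m₁+2)*2) * (s.image φ).card :=
    Finset.card_le_mul_card_image s _ hfiber
  have himgQ : s.image φ ⊆ hQfin.toFinset := by
    intro q hq
    rw [Finset.mem_image] at hq
    obtain ⟨u, hu, rfl⟩ := hq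
    rw [Set.Finite.mem_toFinset]
    exact hφQ u ((hsT u).mp hu)
  have h2 : (s.image φ).card ≤ hQfin.toFinset.card := Finset.card_le_card himgQ
  have hTn : T.ncard = s.card := by
    rw [hs]; exact Set.ncard_eq_toFinset_card T hTfin
  have hQn : Q.ncard = hQfin.toFinset.card := Set.ncard_eq_toFinset_card Q hQfin
  rw [hTn, hQn]
  have hfin : s.card ≤ (m₁+2)*2 * hQfin.toFinset.card :=
    le_trans hmain (Nat.mul_le_mul_left _ h2)
  calc ((s.card:ℝ)) ≤ (((m₁+2)*2 * hQfin.toFinset.card : ℕ):ℝ) := by exact_mod_cast hfin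
    _ = (2*(m₁:ℝ)+4) * (hQfin.toFinset.card:ℝ) := by push_cast; ring
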